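/- Unbiased-strategy factorization for Call-by-Name: for all λ-terms M and N, if M →β* N then there exists a term U with M ⊳* U and U ⋫* N (where * denotes reflexive-transitive closure). -/

import Mathlib

/-- Untyped λ-terms in de Bruijn representation. -/
inductive Tm : Type
  | var : ℕ → Tm
  | lam : Tm → Tm
  | app : Tm → Tm → Tm
deriving DecidableEq

namespace Tm

/-- Lift (shift by one) the free variables of index `≥ d`. -/
def lift (d : ℕ) : Tm → Tm
  | var n => if n < d then var n else var (n + 1)
  | lam M => lam (lift (d + 1) M)
  | app M N => app (lift d M) (lift d N)

/-- Capture-avoiding substitution `M[N/k]` of `N` for the free variable `k` in `M`. -/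
def subst : Tm → ℕ → Tm → Tm
  | var n, k, N => if n = k then N else if k < n then var (n - 1) else var n
  | lam M, k, N => lam (subst M (k + 1) (lift 0 N))
  | app M₁ M₂, k, N => app (subst M₁ k N) (subst M₂ k N)

end Tm

/-- β-reduction: the closure of the root rule `(λx.M)N ↦β M[N/x]` under arbitrary contexts. -/
inductive Beta : Tm → Tm → Prop
  | beta (M N : Tm) : Beta (Tm.app (Tm.lam M) N) (M.subst 0 N)
  | lam {M M'} : Beta M M' → Beta (Tm.lam M) (Tm.lam M')
  | appL {M M' N} : Beta M M' → Beta (Tm.app M N) (Tm.app M' N)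
  | appR {M N N'} : Beta N N' → Beta (Tm.app M N) (Tm.app M N')

/-- Head reduction: the closure of `↦β` under head contexts `H ::= ⟨⟩ | λx.H | H M`. -/
inductive Head : Tm → Tm → Prop
  | beta (M N : Tm) : Head (Tm.app (Tm.lam M) N) (M.subst 0 N)
  | lam {M M'} : Head M M' → Head (Tm.lam M) (Tm.lam M')
  | appL {M M' N} : Head M M' → Head (Tm.app M N) (Tm.app M' N)

/-- The unbiased strategy `⊳`: perform head steps as long as possible; once the term has
no head redex, iterate in the subterms (in arbitrary order). -/
inductive Unb : Tm → Tm → Prop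
  | head {M M'} : Head M M' → Unb M M'
  | lam {P P'} : (∀ s, ¬ Head (Tm.lam P) s) → Unb P P' → Unb (Tm.lam P) (Tm.lam P')
  | appL {P P' Q} : (∀ s, ¬ Head (Tm.app P Q) s) → Unb P P' →
      Unb (Tm.app P Q) (Tm.app P' Q)
  | appR {P Q Q'} : (∀ s, ¬ Head (Tm.app P Q) s) → Unb Q Q' →
      Unb (Tm.app P Q) (Tm.app P Q')

set_option linter.unreachableTactic false
set_option linter.unusedTactic false
set_option linter.unusedVariables false

open Tm (var lam app)

abbrev RTG := @Relation.ReflTransGen Tm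

def sz : Tm → ℕ
  | .var _ => 1
  | .lam t => sz t + 1
  | .app a b => sz a + sz b + 1

@[simp] lemma sz_var (n : ℕ) : sz (var n) = 1 := rfl
@[simp] lemma sz_lam (t : Tm) : sz (lam t) = sz t + 1 := rfl
@[simp] lemma sz_app (a b : Tm) : sz (app a b) = sz a + sz b + 1 := rfl

lemma lift_lift (M : Tm) : ∀ d e, d ≤ e →
    Tm.lift d (Tm.lift e M) = Tm.lift (e+1) (Tm.lift d M) := by
  induction M with
  | var n =>
    intro d e h
    simp only [Tm.lift]
    split_ifs <;> simp only [Tm.lift] <;> split_ifs <;>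
      simp only [Tm.var.injEq] <;> omega
  | lam M ih =>
    intro d e h
    simp only [Tm.lift, Tm.lam.injEq]
    exact ih (d+1) (e+1) (by omega)
  | app M N ihM ihN =>
    intro d e h
    simp only [Tm.lift, Tm.app.injEq]
    exact ⟨ihM d e h, ihN d e h⟩

lemma lift_subst_le (M : Tm) : ∀ d k (N : Tm), d ≤ k →
    Tm.lift d (M.subst k N) = (Tm.lift d M).subst (k+1) (Tm.lift d N) := by
  induction M with
  | var n =>
    intro d k N h
    simp only [Tm.subst, Tm.lift]
    split_ifs <;> simp only [Tm.lift, Tm.subst] <;> split_ifs <;>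
      first
      | rfl
      | (simp only [Tm.var.injEq]; omega)
      | omega
  | lam M ih =>
    intro d k N h
    simp only [Tm.subst, Tm.lift, Tm.lam.injEq]
    rw [ih (d+1) (k+1) _ (by omega), lift_lift N 0 d (by omega)]
  | app M₁ M₂ ih₁ ih₂ =>
    intro d k N h
    simp only [Tm.subst, Tm.lift, Tm.app.injEq]
    exact ⟨ih₁ d k N h, ih₂ d k N h⟩

lemma lift_subst_ge (M : Tm) : ∀ d k (N : Tm), k ≤ d →
    Tm.lift d (M.subst k N) = (Tm.lift (d+1) M).subst k (Tm.lift d N) := by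
  induction M with
  | var n =>
    intro d k N h
    simp only [Tm.subst, Tm.lift]
    split_ifs <;> simp only [Tm.lift, Tm.subst] <;> split_ifs <;>
      first
      | rfl
      | (simp only [Tm.var.injEq]; omega)
      | omega
  | lam M ih =>
    intro d k N h
    simp only [Tm.subst, Tm.lift, Tm.lam.injEq]
    rw [ih (d+1) (k+1) _ (by omega), lift_lift N 0 d (by omega)]
  | app M₁ M₂ ih₁ ih₂ =>
    intro d k N h
    simp only [Tm.subst, Tm.lift, Tm.app.injEq]
    exact ⟨ih₁ d k N h, ih₂ d k N h⟩

lemma subst_lift_cancel (N : Tm) : ∀ k (X : Tm), (Tm.lift k N).subst k X = N := by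
  induction N with
  | var n =>
    intro k X
    simp only [Tm.lift]
    split_ifs <;> simp only [Tm.subst] <;> split_ifs <;>
      first
      | rfl
      | (simp only [Tm.var.injEq]; omega)
      | omega
  | lam M ih =>
    intro k X
    simp only [Tm.lift, Tm.subst, Tm.lam.injEq]
    exact ih (k+1) _
  | app M₁ M₂ ih₁ ih₂ =>
    intro k X
    simp only [Tm.lift, Tm.subst, Tm.app.injEq]
    exact ⟨ih₁ k X, ih₂ k X⟩

lemma subst_subst (A : Tm) : ∀ i j (B N : Tm), i ≤ j →
    (A.subst i B).subst j N = (A.subst (j+1) (Tm.lift i N)).subst i (B.subst j N) := by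
  induction A with
  | var n =>
    intro i j B N h
    simp only [Tm.subst]
    split_ifs <;> (try simp only [Tm.subst]) <;> (try split_ifs) <;>
      (try simp only [Tm.subst]) <;> (try split_ifs) <;>
      first
      | rfl
      | omega
      | (simp only [Tm.var.injEq]; omega)
      | (exact (subst_lift_cancel N i _).symm)
  | lam A ih =>
    intro i j B N h
    simp only [Tm.subst, Tm.lam.injEq]
    rw [ih (i+1) (j+1) _ _ (by omega), lift_subst_le B 0 j _ (by omega),
      lift_lift N 0 i (by omega)]
  | app A₁ A₂ ih₁ ih₂ =>
    intro i j B N h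
    simp only [Tm.subst, Tm.app.injEq]
    exact ⟨ih₁ i j B N h, ih₂ i j B N h⟩
def freeIn : Tm → ℕ → Prop
  | .var n, j => n = j
  | .lam t, j => freeIn t (j+1)
  | .app a b, j => freeIn a j ∨ freeIn b j

def lowFree (S : Tm) (k : ℕ) : Prop := ∀ j, j < k → ¬ freeIn S j

lemma freeIn_lift (S : Tm) : ∀ d j, freeIn (Tm.lift d S) j →
    (j < d ∧ freeIn S j) ∨ (d < j ∧ freeIn S (j - 1)) := by
  induction S with
  | var n =>
    intro d j h
    simp only [Tm.lift] at h
    split_ifs at h <;> simp only [freeIn] at h ⊢ <;> omega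
  | lam t ih =>
    intro d j h
    simp only [Tm.lift, freeIn] at h ⊢
    rcases ih (d+1) (j+1) h with ⟨h1, h2⟩ | ⟨h1, h2⟩
    · exact Or.inl ⟨by omega, h2⟩
    · right
      refine ⟨by omega, ?_⟩
      have : j - 1 + 1 = j + 1 - 1 := by omega
      rw [this]; exact h2
  | app a b iha ihb =>
    intro d j h
    simp only [Tm.lift, freeIn] at h ⊢
    rcases h with h | h
    · rcases iha d j h with ⟨h1,h2⟩|⟨h1,h2⟩
      · exact Or.inl ⟨h1, Or.inl h2⟩
      · exact Or.inr ⟨h1, Or.inl h2⟩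
    · rcases ihb d j h with ⟨h1,h2⟩|⟨h1,h2⟩
      · exact Or.inl ⟨h1, Or.inr h2⟩
      · exact Or.inr ⟨h1, Or.inr h2⟩

lemma lowFree_zero (S : Tm) : lowFree S 0 := fun j hj => by omega

lemma lowFree_lift0 {S : Tm} {k : ℕ} (h : lowFree S k) : lowFree (Tm.lift 0 S) (k+1) := by
  intro j hj hf
  rcases freeIn_lift S 0 j hf with ⟨h1, _⟩ | ⟨h1, h2⟩
  · omega
  · exact h (j-1) (by omega) h2

-- basic inversions
lemma beta_var {n : ℕ} {t : Tm} (h : Beta (var n) t) : False := by cases h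

lemma beta_lam_inv {a t : Tm} (h : Beta (lam a) t) : ∃ b, t = lam b ∧ Beta a b := by
  cases h with
  | lam h => exact ⟨_, rfl, h⟩

lemma head_var {n : ℕ} {t : Tm} (h : Head (var n) t) : False := by cases h

lemma head_lam_inv {a t : Tm} (h : Head (lam a) t) : ∃ b, t = lam b ∧ Head a b := by
  cases h with
  | lam h => exact ⟨_, rfl, h⟩

lemma head_beta_sub {a b : Tm} (h : Head a b) : Beta a b := by
  induction h with
  | beta M N => exact Beta.beta M N
  | lam _ ih => exact Beta.lam ih
  | appL _ ih => exact Beta.appL ih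

def HasHead (t : Tm) : Prop := ∃ s, Head t s

inductive Spine : Tm → Prop
  | var (n : ℕ) : Spine (var n)
  | app {f a} : Spine f → Spine (app f a)

lemma spine_noHead {t : Tm} (hs : Spine t) {s : Tm} (h : Head t s) : False := by
  induction h with
  | beta M N => cases hs with | app h => cases h
  | lam _ _ => cases hs
  | appL _ ih => cases hs with | app h => exact ih h

lemma spine_beta {a b : Tm} (hs : Spine a) (h : Beta a b) : Spine b := by
  induction h with
  | beta M N => cases hs with | app h => cases h
  | lam _ _ => cases hs
  | appL _ ih => cases hs with | app h => exact Spine.app (ih h)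
  | appR _ _ => cases hs with | app h => exact Spine.app h

lemma notlam_nohead_spine : ∀ (t : Tm), ¬ HasHead t → (∀ b, t ≠ lam b) → Spine t := by
  intro t
  induction t with
  | var n => intro _ _; exact Spine.var n
  | lam b ih => intro _ h; exact absurd rfl (h b)
  | app f a ih _ =>
    intro h _
    refine Spine.app (ih ?_ ?_)
    · rintro ⟨s, hs⟩; exact h ⟨_, Head.appL hs⟩
    · rintro b rfl; exact h ⟨_, Head.beta b a⟩

lemma hasHead_pres {a b : Tm} (h : Beta a b) (hnh : ¬ Head a b) (ha : HasHead a) :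
    HasHead b := by
  induction h with
  | beta M N => exact absurd (Head.beta M N) hnh
  | @lam M M' h ih =>
    obtain ⟨s, hs⟩ := ha
    obtain ⟨s', rfl, hs'⟩ := head_lam_inv hs
    obtain ⟨t, ht⟩ := ih (fun hh => hnh (Head.lam hh)) ⟨_, hs'⟩
    exact ⟨_, Head.lam ht⟩
  | @appL M M' N h ih =>
    obtain ⟨s, hs⟩ := ha
    cases hs with
    | beta B _ =>
      obtain ⟨B', rfl, _⟩ := beta_lam_inv h
      exact ⟨_, Head.beta B' N⟩
    | appL hM =>
      obtain ⟨t, ht⟩ := ih (fun hh => hnh (Head.appL hh)) ⟨_, hM⟩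
      exact ⟨_, Head.appL ht⟩
  | @appR M N N' h ih =>
    obtain ⟨s, hs⟩ := ha
    cases hs with
    | beta B _ => exact ⟨_, Head.beta B N'⟩
    | appL hM => exact ⟨_, Head.appL hM⟩
lemma lemT : ∀ (W : ℕ) (t : Tm), sz t < W → ∀ {u S : Tm} {k : ℕ}, 1 ≤ k →
    lowFree S k → t.subst k S = app (lam t) u → False := by
  intro W
  induction W with
  | zero => intro t h; omega
  | succ W ih =>
    intro t ht u S k hk hlf heq
    match t with
    | .var n =>
      simp only [Tm.subst] at heq
      split_ifs at heq with h1 h2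
      · -- S = app (lam (var n)) u , n = k
        apply hlf (k-1) (by omega)
        rw [heq]
        simp only [freeIn]
        left
        try simp only [freeIn]
        omega
    | .lam D => simp only [Tm.subst] at heq; exact Tm.noConfusion heq
    | .app t₁ t₂ =>
      simp only [Tm.subst, Tm.app.injEq] at heq
      obtain ⟨h1, h2⟩ := heq
      match t₁ with
      | .var m =>
        simp only [Tm.subst] at h1
        split_ifs at h1 with hm1 hm2
        · apply hlf (k-1) (by omega)
          rw [h1]
          simp only [freeIn]
          left
          try simp only [freeIn]
          omega
      | .lam C =>
        simp only [Tm.subst, Tm.lam.injEq] at h1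
        exact ih C (by simp at ht ⊢; omega) (by omega) (lowFree_lift0 hlf) h1
      | .app a b => simp only [Tm.subst] at h1; exact Tm.noConfusion h1

lemma lemT' {t u S : Tm} {k : ℕ} (hk : 1 ≤ k) (hlf : lowFree S k)
    (heq : t.subst k S = app (lam t) u) : False :=
  lemT (sz t + 1) t (Nat.lt_succ_self _) hk hlf heq

lemma lemQ (t : Tm) {u S : Tm} {k : ℕ} (hk : 1 ≤ k) (hlf : lowFree S k)
    (heq : t.subst k S = lam (app t u)) : False := by
  match t with
  | .var n =>
    simp only [Tm.subst] at heq
    split_ifs at heq with h1 h2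
    · apply hlf (k-1) (by omega)
      rw [heq]
      simp only [freeIn]
      left
      try simp only [freeIn]
      omega
  | .app a b => simp only [Tm.subst] at heq; exact Tm.noConfusion heq
  | .lam D =>
    simp only [Tm.subst, Tm.lam.injEq] at heq
    exact lemT' (by omega) (lowFree_lift0 hlf) heq

lemma lemS2 : ∀ (W : ℕ) (t : Tm), sz t < W → ∀ {t' S : Tm} {d : ℕ},
    (∃ S₀, S = lam S₀) → t.subst d S = lam (app (var 0) t') → Beta t t' → False := by
  intro W
  induction W with
  | zero => intro t h; omega
  | succ W ih =>
    intro t ht t' S d hS heq hβ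
    match t with
    | .var n => exact beta_var hβ
    | .app a b => simp only [Tm.subst] at heq; exact Tm.noConfusion heq
    | .lam t₁ =>
      simp only [Tm.subst, Tm.lam.injEq] at heq
      obtain ⟨t₁', rfl, hβ₁⟩ := beta_lam_inv hβ
      match t₁, heq, hβ₁ with
      | .var m, heq, hβ₁ => exact beta_var hβ₁
      | .lam D, heq, hβ₁ => simp only [Tm.subst] at heq; exact Tm.noConfusion heq
      | .app u v, heq, hβ₁ =>
        simp only [Tm.subst, Tm.app.injEq] at heq
        obtain ⟨h1, h2⟩ := heq
        obtain ⟨S₀, rfl⟩ := hS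
        -- u must be var 0
        match u, h1 with
        | .var m, h1 =>
          simp only [Tm.subst] at h1
          split_ifs at h1 with hm1 hm2
          · rw [Tm.lift] at h1; exact Tm.noConfusion h1
          · simp only [Tm.var.injEq] at h1; omega
          · simp only [Tm.var.injEq] at h1
            subst h1
            -- u = var 0 : analyze Beta (app (var 0) v) t₁'
            cases hβ₁ with
            | appL h => exact beta_var h
            | appR h =>
              rename_i v'
              -- h2 : v.subst (d+1) (lift 0 (lam S₀)) = lam (app (var 0) v')
              exact ih v (by simp at ht ⊢; omega)
                ⟨Tm.lift 1 S₀, rfl⟩ h2 h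
        | .lam D, h1 => simp only [Tm.subst] at h1; exact Tm.noConfusion h1
        | .app a b, h1 => simp only [Tm.subst] at h1; exact Tm.noConfusion h1

lemma lemS2' (t : Tm) {t' S : Tm} {d : ℕ} (hS : ∃ S₀, S = lam S₀)
    (heq : t.subst d S = lam (app (var 0) t')) (hβ : Beta t t') : False :=
  lemS2 (sz t + 1) t (Nat.lt_succ_self _) hS heq hβ

lemma lemP : ∀ (W : ℕ) (t : Tm), sz t < W → ∀ {t' s S : Tm} {d : ℕ},
    lowFree S d → t.subst d S = lam (app t' s) → Beta t t' → ¬ Head t t' → False := by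
  intro W
  induction W with
  | zero => intro t h; omega
  | succ W ih =>
    intro t ht t' s S d hlf heq hβ hnh
    match t with
    | .var n => exact beta_var hβ
    | .app a b => simp only [Tm.subst] at heq; exact Tm.noConfusion heq
    | .lam C =>
      simp only [Tm.subst, Tm.lam.injEq] at heq
      obtain ⟨C', rfl, hβC⟩ := beta_lam_inv hβ
      have hnhC : ¬ Head C C' := fun hh => hnh (Head.lam hh)
      match C, heq, hβC, hnhC with
      | .var m, heq, hβC, hnhC => exact beta_var hβC
      | .lam D, heq, hβC, hnhC => simp only [Tm.subst] at heq; exact Tm.noConfusion heq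
      | .app C₁ C₂, heq, hβC, hnhC =>
        simp only [Tm.subst, Tm.app.injEq] at heq
        obtain ⟨h1, h2⟩ := heq
        cases hβC with
        | beta E _ => exact hnhC (Head.beta E C₂)
        | appL h =>
          refine ih C₁ (by simp at ht ⊢; omega) (lowFree_lift0 hlf) h1 h ?_
          exact fun hh => hnhC (Head.appL hh)
        | appR h =>
          exact lemQ C₁ (by omega) (lowFree_lift0 hlf) h1

lemma lemP' (t : Tm) {t' s S : Tm} {d : ℕ} (hlf : lowFree S d)
    (heq : t.subst d S = lam (app t' s)) (hβ : Beta t t') (hnh : ¬ Head t t') : False :=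
  lemP (sz t + 1) t (Nat.lt_succ_self _) hlf heq hβ hnh

/-- `bad1`: the only coincidence `B[0:=c] = (λB) c'` with `Beta c c'` is `B = var 0`. -/
lemma bad1 (B : Tm) {c c' : Tm} (heq : B.subst 0 c = app (lam B) c') (hβ : Beta c c') :
    B = var 0 := by
  match B, heq with
  | .var n, heq =>
    simp only [Tm.subst] at heq
    split_ifs at heq with h1 h2
    · subst h1; rfl
  | .lam D, heq => simp only [Tm.subst] at heq; exact Tm.noConfusion heq
  | .app B₁ B₂, heq =>
    simp only [Tm.subst, Tm.app.injEq] at heq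
    obtain ⟨h1, h2⟩ := heq
    exfalso
    match B₁, h1 with
    | .var m, h1 =>
      simp only [Tm.subst] at h1
      split_ifs at h1 with hm1 hm2
      · -- c = lam (app (var 0) B₂)
        subst hm1
        obtain ⟨B', hc', hβ'⟩ := beta_lam_inv (h1 ▸ hβ)
        cases hβ' with
        | appL h => exact beta_var h
        | appR h =>
          rename_i B₂'
          -- h2 : B₂.subst 0 c = c' , hc' : c' = lam (app (var 0) B₂')
          exact lemS2' B₂ ⟨_, h1⟩ (by rw [h2, hc']) h
    | .lam C, h1 =>
      simp only [Tm.subst, Tm.lam.injEq] at h1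
      exact lemT' (by omega) (lowFree_lift0 (lowFree_zero c)) h1
    | .app a b, h1 => simp only [Tm.subst] at h1; exact Tm.noConfusion h1

/-- `bad2`: no coincidence `B[0:=A] = (λB') A` with `Beta B B'` not a head pair. -/
lemma bad2 (B : Tm) {B' A : Tm} (heq : B.subst 0 A = app (lam B') A)
    (hβ : Beta B B') (hnh : ¬ Head B B') : False := by
  match B, heq, hβ, hnh with
  | .var n, heq, hβ, hnh => exact beta_var hβ
  | .lam D, heq, hβ, hnh => simp only [Tm.subst] at heq; exact Tm.noConfusion heq
  | .app B₁ B₂, heq, hβ, hnh =>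
    simp only [Tm.subst, Tm.app.injEq] at heq
    obtain ⟨h1, h2⟩ := heq
    cases hβ with
    | beta E _ => exact hnh (Head.beta E B₂)
    | appL h =>
      refine lemP' B₁ (lowFree_zero A) h1 h ?_
      exact fun hh => hnh (Head.appL hh)
    | appR h =>
      rename_i B₂'
      match B₁, h1 with
      | .var m, h1 =>
        simp only [Tm.subst] at h1
        split_ifs at h1 with hm1 hm2
        · subst hm1
          exact lemS2' B₂ ⟨_, h1⟩ (by rw [h2, h1]) h
      | .lam D, h1 =>
        simp only [Tm.subst, Tm.lam.injEq] at h1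
        exact lemT' (by omega) (lowFree_lift0 (lowFree_zero A)) h1
      | .app a b, h1 => simp only [Tm.subst] at h1; exact Tm.noConfusion h1
inductive Par : Tm → Tm → Prop
  | var (n : ℕ) : Par (var n) (var n)
  | lam {M M'} : Par M M' → Par (lam M) (lam M')
  | app {M M' N N'} : Par M M' → Par N N' → Par (app M N) (app M' N')
  | beta {M M' N N'} : Par M M' → Par N N' → Par (app (lam M) N) (M'.subst 0 N')

inductive PInt : Tm → Tm → Prop
  | var (n : ℕ) : PInt (var n) (var n)
  | lam {M M'} : PInt M M' → PInt (lam M) (lam M')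
  | app {M M' N N'} : PInt M M' → Par N N' → PInt (app M N) (app M' N')

lemma par_refl (t : Tm) : Par t t := by
  induction t with
  | var n => exact Par.var n
  | lam M ih => exact Par.lam ih
  | app M N ihM ihN => exact Par.app ihM ihN

lemma pint_refl (t : Tm) : PInt t t := by
  induction t with
  | var n => exact PInt.var n
  | lam M ih => exact PInt.lam ih
  | app M N ihM ihN => exact PInt.app ihM (par_refl N)

lemma pint_par {a b : Tm} (h : PInt a b) : Par a b := by
  induction h with
  | var n => exact Par.var n
  | lam _ ih => exact Par.lam ih
  | app _ hN ih => exact Par.app ih hN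

lemma beta_par {a b : Tm} (h : Beta a b) : Par a b := by
  induction h with
  | beta M N => exact Par.beta (par_refl M) (par_refl N)
  | lam _ ih => exact Par.lam ih
  | appL _ ih => exact Par.app ih (par_refl _)
  | appR _ ih => exact Par.app (par_refl _) ih

lemma par_lift {a b : Tm} (h : Par a b) : ∀ d, Par (Tm.lift d a) (Tm.lift d b) := by
  induction h with
  | var n => intro d; simp only [Tm.lift]; split_ifs <;> apply Par.var
  | lam _ ih => intro d; exact Par.lam (ih (d+1))
  | app _ _ ihM ihN => intro d; exact Par.app (ihM d) (ihN d)
  | @beta M M' N N' _ _ ihM ihN =>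
    intro d
    have := Par.beta (ihM (d+1)) (ihN d)
    rwa [← lift_subst_ge M' d 0 N' (by omega)] at this

lemma pint_lift {a b : Tm} (h : PInt a b) : ∀ d, PInt (Tm.lift d a) (Tm.lift d b) := by
  induction h with
  | var n => intro d; simp only [Tm.lift]; split_ifs <;> apply PInt.var
  | lam _ ih => intro d; exact PInt.lam (ih (d+1))
  | app _ hN ih => intro d; exact PInt.app (ih d) (par_lift hN d)

lemma head_lift {a b : Tm} (h : Head a b) : ∀ d, Head (Tm.lift d a) (Tm.lift d b) := by
  induction h with
  | beta M N =>
    intro d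
    have := Head.beta (Tm.lift (d+1) M) (Tm.lift d N)
    rwa [← lift_subst_ge M d 0 N (by omega)] at this
  | lam _ ih => intro d; exact Head.lam (ih (d+1))
  | appL _ ih => intro d; exact Head.appL (ih d)

lemma head_subst {a b : Tm} (h : Head a b) : ∀ k (N : Tm),
    Head (a.subst k N) (b.subst k N) := by
  induction h with
  | beta M C =>
    intro k N
    have := Head.beta (M.subst (k+1) (Tm.lift 0 N)) (C.subst k N)
    rwa [← subst_subst M 0 k C N (by omega)] at this
  | lam _ ih => intro k N; exact Head.lam (ih (k+1) _)
  | appL _ ih => intro k N; exact Head.appL (ih k N)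

lemma par_subst {a b : Tm} (h : Par a b) : ∀ k {N N' : Tm}, Par N N' →
    Par (a.subst k N) (b.subst k N') := by
  induction h with
  | var n =>
    intro k N N' hN
    simp only [Tm.subst]
    split_ifs <;> first | exact hN | apply Par.var
  | lam _ ih => intro k N N' hN; exact Par.lam (ih (k+1) (par_lift hN 0))
  | app _ _ ihM ihN => intro k N N' hN; exact Par.app (ihM k hN) (ihN k hN)
  | @beta M M' C C' _ _ ihM ihC =>
    intro k N N' hN
    have := Par.beta (ihM (k+1) (par_lift hN 0)) (ihC k hN)
    simp only [Tm.subst]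
    rwa [← subst_subst M' 0 k C' N' (by omega)] at this

lemma merge {M N P : Tm} (hi : PInt M N) (hh : Head N P) : Par M P := by
  induction hh generalizing M with
  | beta B C =>
    cases hi with
    | app h1 h2 =>
      cases h1 with
      | lam h3 => exact Par.beta (pint_par h3) h2
  | lam _ ih =>
    cases hi with
    | lam h => exact Par.lam (ih h)
  | appL _ ih =>
    cases hi with
    | app h1 h2 => exact Par.app (ih h1) h2

lemma aux2 {P₁ M' : Tm} (h : PInt P₁ M') : ∀ (k : ℕ) {N N' Q : Tm}, Par N N' →
    RTG Head N Q → PInt Q N' →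
    ∃ R, RTG Head (P₁.subst k N) R ∧ PInt R (M'.subst k N') := by
  induction h with
  | var n =>
    intro k N N' Q hN hNQ hQ
    by_cases hnk : n = k
    · subst hnk
      refine ⟨Q, ?_, ?_⟩
      · simpa only [Tm.subst, if_pos rfl, ↓reduceIte] using hNQ
      · simpa only [Tm.subst, if_pos rfl, ↓reduceIte] using hQ
    · refine ⟨(var n).subst k N, Relation.ReflTransGen.refl, ?_⟩
      have : (var n).subst k N' = (var n).subst k N := by
        simp only [Tm.subst, if_neg hnk]
      rw [this]
      exact pint_refl _
  | @lam A A' _ ih =>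
    intro k N N' Q hN hNQ hQ
    obtain ⟨R₀, hR1, hR2⟩ := ih (k+1) (par_lift hN 0)
      (Relation.ReflTransGen.lift (Tm.lift 0) (fun a b hab => head_lift hab 0) _ _ hNQ)
      (pint_lift hQ 0)
    exact ⟨lam R₀, Relation.ReflTransGen.lift Tm.lam (fun a b hab => Head.lam hab) _ _ hR1,
      PInt.lam hR2⟩
  | @app A A' B B' _ hB ih =>
    intro k N N' Q hN hNQ hQ
    obtain ⟨R₁, hR1, hR2⟩ := ih k hN hNQ hQ
    refine ⟨app R₁ (B.subst k N), ?_, ?_⟩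
    · exact Relation.ReflTransGen.lift (fun x => app x (B.subst k N))
        (fun a b hab => Head.appL hab) _ _ hR1
    · exact PInt.app hR2 (par_subst hB k hN)

lemma split {M N : Tm} (h : Par M N) : ∃ P, RTG Head M P ∧ PInt P N := by
  induction h with
  | var n => exact ⟨var n, Relation.ReflTransGen.refl, PInt.var n⟩
  | lam _ ih =>
    obtain ⟨P, h1, h2⟩ := ih
    exact ⟨lam P, Relation.ReflTransGen.lift Tm.lam (fun a b hab => Head.lam hab) _ _ h1,
      PInt.lam h2⟩
  | @app M M' N N' _ hN ih _ =>
    obtain ⟨P, h1, h2⟩ := ih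
    exact ⟨app P N, Relation.ReflTransGen.lift (fun x => app x N)
      (fun a b hab => Head.appL hab) _ _ h1, PInt.app h2 hN⟩
  | @beta M M' N N' hM hN ihM ihN =>
    obtain ⟨P₁, h1, h2⟩ := ihM
    obtain ⟨Q, h3, h4⟩ := ihN
    obtain ⟨R, h5, h6⟩ := aux2 h2 0 hN h3 h4
    refine ⟨R, ?_, h6⟩
    refine Relation.ReflTransGen.head (Head.beta M N) ?_
    refine Relation.ReflTransGen.trans ?_ h5
    exact Relation.ReflTransGen.lift (fun x : Tm => x.subst 0 N)
      (fun a b hab => head_subst hab 0 N) _ _ h1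

lemma pushPar {X Y Z : Tm} (hi : PInt X Y) (hh : RTG Head Y Z) :
    ∃ W, RTG Head X W ∧ PInt W Z := by
  induction hh using Relation.ReflTransGen.head_induction_on generalizing X with
  | refl => exact ⟨X, Relation.ReflTransGen.refl, hi⟩
  | head h _ ih =>
    obtain ⟨S, h1, h2⟩ := split (merge hi h)
    obtain ⟨W, h3, h4⟩ := ih h2
    exact ⟨W, Relation.ReflTransGen.trans h1 h3, h4⟩

lemma pushSeq {P Y : Tm} (hp : RTG PInt P Y) : ∀ {Z : Tm}, RTG Head Y Z →
    ∃ P', RTG Head P P' ∧ RTG PInt P' Z := by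
  induction hp with
  | refl => intro Z hh; exact ⟨Z, hh, Relation.ReflTransGen.refl⟩
  | tail _ hstep ih =>
    intro Z hh
    obtain ⟨W, h1, h2⟩ := pushPar hstep hh
    obtain ⟨P', h3, h4⟩ := ih h1
    exact ⟨P', h3, Relation.ReflTransGen.tail h4 h2⟩

lemma macroFact {M N : Tm} (h : RTG Beta M N) : ∃ P, RTG Head M P ∧ RTG PInt P N := by
  induction h with
  | refl => exact ⟨M, Relation.ReflTransGen.refl, Relation.ReflTransGen.refl⟩
  | tail _ hstep ih =>
    obtain ⟨P, h1, h2⟩ := ih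
    obtain ⟨Q, h3, h4⟩ := split (beta_par hstep)
    obtain ⟨P', h5, h6⟩ := pushSeq h2 h3
    exact ⟨P', Relation.ReflTransGen.trans h1 h5, Relation.ReflTransGen.tail h6 h4⟩
def Int1 (a b : Tm) : Prop := Beta a b ∧ ¬ Head a b

abbrev tmI : Tm := Tm.lam (Tm.var 0)

lemma head_I_root (a : Tm) : Head (app tmI a) a := by
  have := Head.beta (var 0) a
  simpa [Tm.subst] using this

lemma headI_inv {c t : Tm} (h : Head (app tmI c) t) : t = c := by
  cases h with
  | beta M N => simp [Tm.subst]
  | appL hh =>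
    obtain ⟨b, _, hb⟩ := head_lam_inv hh
    exact absurd hb head_var

lemma pint_to_I {M : Tm} (h : PInt M tmI) : M = tmI := by
  cases h with
  | lam h0 => cases h0 with | var n => rfl

lemma rtg_lift_ne {r s : Tm → Tm → Prop} (f : Tm → Tm)
    (h : ∀ a b, r a b → a ≠ b → s (f a) (f b)) {x y : Tm} (hr : Relation.ReflTransGen r x y) :
    Relation.ReflTransGen s (f x) (f y) := by
  induction hr with
  | refl => exact Relation.ReflTransGen.refl
  | @tail b c _ hstep ih =>
    by_cases hbc : b = c
    · subst hbc; exact ih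
    · exact Relation.ReflTransGen.tail ih (h _ _ hstep hbc)

lemma int1_lam {a b : Tm} (h : Int1 a b) : Int1 (lam a) (lam b) := by
  refine ⟨Beta.lam h.1, fun hhd => ?_⟩
  obtain ⟨b', heq, hb⟩ := head_lam_inv hhd
  cases heq
  exact h.2 hb

lemma head_app_inv {f a t : Tm} (h : Head (app f a) t) :
    (∃ B, f = lam B ∧ t = B.subst 0 a) ∨ (∃ f', t = app f' a ∧ Head f f') := by
  cases h with
  | beta B N => exact Or.inl ⟨B, rfl, rfl⟩
  | appL hh => exact Or.inr ⟨_, rfl, hh⟩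

lemma int1_appL (N : Tm) {a b : Tm} (h : Int1 a b) : Int1 (app a N) (app b N) := by
  refine ⟨Beta.appL h.1, fun hhd => ?_⟩
  rcases head_app_inv hhd with ⟨B, rfl, heq⟩ | ⟨f', heq, hh⟩
  · obtain ⟨B', rfl, hBB⟩ := beta_lam_inv h.1
    exact bad2 B heq.symm hBB (fun hh => h.2 (Head.lam hh))
  · have hb : b = f' := by injection heq with h1 h2
    exact h.2 (hb ▸ hh)

lemma int1_appR {M' c c' : Tm} (hI : M' ≠ tmI) (hb : Beta c c') (hne : c ≠ c') :
    Int1 (app M' c) (app M' c') := by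
  refine ⟨Beta.appR hb, fun hhd => ?_⟩
  rcases head_app_inv hhd with ⟨B, rfl, heq⟩ | ⟨f', heq, hh⟩
  · exact hI (by rw [bad1 B heq.symm hb])
  · exact hne (by injection heq with h1 h2; exact h2.symm)

lemma liftIntsI {V₂ N' : Tm} (h : RTG Int1 V₂ N') :
    RTG Int1 (app tmI V₂) (app tmI N') := by
  refine Relation.ReflTransGen.lift (fun x => app tmI x) (fun a b hab => ?_) _ _ h
  refine ⟨Beta.appR hab.1, fun hhd => ?_⟩
  have := headI_inv hhd
  exact hab.2 (this ▸ head_I_root b)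

lemma lemIC {c V₂ : Tm} (hh : RTG Head c V₂) : ∀ {N' : Tm}, RTG Int1 V₂ N' →
    ∃ U, RTG Head (app tmI c) U ∧ RTG Int1 U (app tmI N') := by
  induction hh using Relation.ReflTransGen.head_induction_on with
  | refl => intro N' hi; exact ⟨app tmI V₂, Relation.ReflTransGen.refl, liftIntsI hi⟩
  | @head a a₁ hstep hrest ih =>
    intro N' hi
    obtain ⟨U, hU, iU⟩ := ih hi
    rcases Relation.ReflTransGen.cases_head hU with rfl | ⟨s, hs1, hs2⟩
    · by_cases haI : a = app tmI a₁
      · refine ⟨app tmI a₁, Relation.ReflTransGen.single ?_, iU⟩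
        rw [haI]
        exact head_I_root _
      · refine ⟨app tmI a, Relation.ReflTransGen.refl, Relation.ReflTransGen.head ?_ iU⟩
        refine ⟨Beta.appR (head_beta_sub hstep), fun hhd => ?_⟩
        exact haI (headI_inv hhd).symm
    · have hs1' : s = a₁ := headI_inv hs1
      subst hs1'
      exact ⟨U, Relation.ReflTransGen.head (head_I_root a)
        (Relation.ReflTransGen.head hstep hs2), iU⟩

lemma starGen : ∀ (W : ℕ) {X Y : Tm}, sz Y < W → PInt X Y →
    ∃ U, RTG Head X U ∧ RTG Int1 U Y := by
  intro W
  induction W with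
  | zero => intro X Y h; omega
  | succ W ih =>
    intro X Y hY h
    cases h with
    | var n => exact ⟨var n, Relation.ReflTransGen.refl, Relation.ReflTransGen.refl⟩
    | @lam M M' hMM =>
      obtain ⟨U₀, h1, h2⟩ := ih (by simp at hY ⊢; omega) hMM
      exact ⟨lam U₀, Relation.ReflTransGen.lift Tm.lam (fun a b hab => Head.lam hab) _ _ h1,
        Relation.ReflTransGen.lift Tm.lam (fun a b hab => int1_lam hab) _ _ h2⟩
    | @app M M' N N' hM hN =>
      by_cases hI : M' = tmI
      · subst hI
        have hMI : M = tmI := pint_to_I hM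
        subst hMI
        obtain ⟨P₀, hn1, hn2⟩ := split hN
        obtain ⟨V₂, hv1, hv2⟩ := ih (by simp at hY ⊢; omega) hn2
        exact lemIC (Relation.ReflTransGen.trans hn1 hv1) hv2
      · obtain ⟨V, hm1, hm2⟩ := ih (by simp at hY ⊢; omega) hM
        obtain ⟨P₀, hn1, hn2⟩ := split hN
        obtain ⟨V₂, hv1, hv2⟩ := ih (by simp at hY ⊢; omega) hn2
        have seg1 : RTG Head (app M N) (app V N) :=
          Relation.ReflTransGen.lift (fun x => app x N) (fun a b hab => Head.appL hab) _ _ hm1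
        have seg2 : RTG Int1 (app V N) (app M' N) :=
          Relation.ReflTransGen.lift (fun x => app x N) (fun a b hab => int1_appL N hab) _ _ hm2
        have seg3 : RTG Int1 (app M' N) (app M' V₂) :=
          rtg_lift_ne (fun x => app M' x)
            (fun a b hab hne => int1_appR hI (head_beta_sub hab) hne)
            (Relation.ReflTransGen.trans hn1 hv1)
        have seg4 : RTG Int1 (app M' V₂) (app M' N') :=
          rtg_lift_ne (fun x => app M' x)
            (fun a b hab hne => int1_appR hI hab.1 hne) hv2
        exact ⟨app V N, seg1, Relation.ReflTransGen.trans seg2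
          (Relation.ReflTransGen.trans seg3 seg4)⟩

lemma lemCB {X N : Tm} (h : RTG PInt X N) : ∃ U, RTG Head X U ∧ RTG Int1 U N := by
  induction h using Relation.ReflTransGen.head_induction_on with
  | refl => exact ⟨N, Relation.ReflTransGen.refl, Relation.ReflTransGen.refl⟩
  | head hstep _ ih =>
    obtain ⟨U₁, h1, h2⟩ := ih
    obtain ⟨W, h3, h4⟩ := pushPar hstep h1
    obtain ⟨V, h5, h6⟩ := starGen (sz U₁ + 1) (Nat.lt_succ_self _) h4
    exact ⟨V, Relation.ReflTransGen.trans h3 h5, Relation.ReflTransGen.trans h6 h2⟩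

lemma diamond {M N : Tm} (h : RTG Beta M N) : ∃ U, RTG Head M U ∧ RTG Int1 U N := by
  obtain ⟨P, h1, h2⟩ := macroFact h
  obtain ⟨U, h3, h4⟩ := lemCB h2
  exact ⟨U, Relation.ReflTransGen.trans h1 h3, h4⟩
def Rest (a b : Tm) : Prop := Beta a b ∧ ¬ Unb a b

lemma unb_beta_sub {a b : Tm} (h : Unb a b) : Beta a b := by
  induction h with
  | head hh => exact head_beta_sub hh
  | lam _ _ ih => exact Beta.lam ih
  | appL _ _ ih => exact Beta.appL ih
  | appR _ _ ih => exact Beta.appR ih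

lemma unb_hashead {a b : Tm} (ha : HasHead a) (h : Unb a b) : Head a b := by
  cases h with
  | head hh => exact hh
  | lam h0 _ => obtain ⟨s, hs⟩ := ha; exact absurd hs (h0 s)
  | appL h0 _ => obtain ⟨s, hs⟩ := ha; exact absurd hs (h0 s)
  | appR h0 _ => obtain ⟨s, hs⟩ := ha; exact absurd hs (h0 s)

lemma restChain {N : Tm} : ∀ {a : Tm}, RTG Int1 a N → HasHead a → RTG Rest a N := by
  intro a h
  induction h using Relation.ReflTransGen.head_induction_on with
  | refl => intro _; exact Relation.ReflTransGen.refl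
  | head hstep _ ih =>
    intro ha
    exact Relation.ReflTransGen.head
      ⟨hstep.1, fun hu => hstep.2 (unb_hashead ha hu)⟩
      (ih (hasHead_pres hstep.1 hstep.2 ha))

lemma unb_lam {a b : Tm} (h : Unb a b) : Unb (lam a) (lam b) := by
  by_cases ha : HasHead a
  · exact Unb.head (Head.lam (unb_hashead ha h))
  · refine Unb.lam (fun s hs => ?_) h
    obtain ⟨b', _, hb⟩ := head_lam_inv hs
    exact ha ⟨_, hb⟩

lemma unb_lam_inv {a b : Tm} (h : Unb (lam a) (lam b)) : Unb a b := by
  cases h with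
  | head hh =>
    obtain ⟨b', heq, hb⟩ := head_lam_inv hh
    cases heq
    exact Unb.head hb
  | lam _ h => exact h

lemma rest_lam {a b : Tm} (h : Rest a b) : Rest (lam a) (lam b) :=
  ⟨Beta.lam h.1, fun hu => h.2 (unb_lam_inv hu)⟩

lemma unb_app_inv {f a t : Tm} (h : Unb (app f a) t) :
    Head (app f a) t ∨ (∃ f', t = app f' a ∧ Unb f f') ∨ (∃ a', t = app f a' ∧ Unb a a') := by
  cases h with
  | head hh => exact Or.inl hh
  | appL _ h => exact Or.inr (Or.inl ⟨_, rfl, h⟩)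
  | appR _ h => exact Or.inr (Or.inr ⟨_, rfl, h⟩)

lemma unb_appL_spine {a b q : Tm} (hs : Spine a) (h : Unb a b) : Unb (app a q) (app b q) :=
  Unb.appL (fun s hh => absurd hh (fun hh' => spine_noHead (Spine.app hs) hh')) h

lemma unb_appR_spine {f a b : Tm} (hs : Spine f) (h : Unb a b) : Unb (app f a) (app f b) :=
  Unb.appR (fun s hh => absurd hh (fun hh' => spine_noHead (Spine.app hs) hh')) h

lemma rest_appR {f a b : Tm} (hs : Spine f) (h : Rest a b) (hne : a ≠ b) :
    Rest (app f a) (app f b) := by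
  refine ⟨Beta.appR h.1, fun hu => ?_⟩
  rcases unb_app_inv hu with hh | ⟨f', heq, h'⟩ | ⟨a', heq, h'⟩
  · exact spine_noHead (Spine.app hs) hh
  · injection heq with h1 h2; exact hne h2.symm
  · injection heq with h1 h2; exact h.2 (h2 ▸ h')

lemma rest_appL {a b q : Tm} (hs : Spine a) (h : Rest a b) (hne : a ≠ b) :
    Rest (app a q) (app b q) := by
  refine ⟨Beta.appL h.1, fun hu => ?_⟩
  rcases unb_app_inv hu with hh | ⟨f', heq, h'⟩ | ⟨a', heq, h'⟩
  · exact spine_noHead (Spine.app hs) hh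
  · injection heq with h1 h2; exact h.2 (h1 ▸ h')
  · injection heq with h1 h2; exact hne h1.symm

lemma noHead_app_spine {f a : Tm} (h : ¬ HasHead (app f a)) : Spine f := by
  refine notlam_nohead_spine f (fun hf => ?_) (fun b hb => ?_)
  · obtain ⟨s, hs⟩ := hf
    exact h ⟨_, Head.appL hs⟩
  · subst hb
    exact h ⟨_, Head.beta b a⟩

lemma beta_app_inv {f a t : Tm} (h : Beta (app f a) t) :
    (∃ B, f = lam B ∧ t = B.subst 0 a) ∨ (∃ f', t = app f' a ∧ Beta f f') ∨
      (∃ a', t = app f a' ∧ Beta a a') := by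
  cases h with
  | beta B N => exact Or.inl ⟨B, rfl, rfl⟩
  | appL hh => exact Or.inr (Or.inl ⟨_, rfl, hh⟩)
  | appR hh => exact Or.inr (Or.inr ⟨_, rfl, hh⟩)

lemma rtg_beta_var {n : ℕ} {N : Tm} (h : RTG Beta (var n) N) : N = var n := by
  rcases Relation.ReflTransGen.cases_head h with rfl | ⟨s, hs, _⟩
  · rfl
  · exact absurd hs beta_var

lemma rtg_beta_lam {N : Tm} : ∀ {x : Tm}, RTG Beta x N → ∀ {a : Tm}, x = lam a →
    ∃ b, N = lam b ∧ RTG Beta a b := by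
  intro x h
  induction h using Relation.ReflTransGen.head_induction_on with
  | refl => intro a ha; exact ⟨a, ha, Relation.ReflTransGen.refl⟩
  | head hstep _ ih =>
    intro a ha
    subst ha
    obtain ⟨a₁, rfl, hβ⟩ := beta_lam_inv hstep
    obtain ⟨b, hb, hrest⟩ := ih rfl
    exact ⟨b, hb, Relation.ReflTransGen.head hβ hrest⟩

lemma rtg_beta_spine_app {N : Tm} : ∀ {x : Tm}, RTG Beta x N →
    ∀ {f a : Tm}, x = app f a → Spine f →
    ∃ f' a', N = app f' a' ∧ RTG Beta f f' ∧ RTG Beta a a' := by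
  intro x h
  induction h using Relation.ReflTransGen.head_induction_on with
  | refl =>
    intro f a ha _
    exact ⟨f, a, ha, Relation.ReflTransGen.refl, Relation.ReflTransGen.refl⟩
  | head hstep _ ih =>
    intro f a ha hs
    subst ha
    rcases beta_app_inv hstep with ⟨B, rfl, _⟩ | ⟨f₁, rfl, hβ⟩ | ⟨a₁, rfl, hβ⟩
    · cases hs
    · obtain ⟨f', a', hN, h1, h2⟩ := ih rfl (spine_beta hs hβ)
      exact ⟨f', a', hN, Relation.ReflTransGen.head hβ h1, h2⟩
    · obtain ⟨f', a', hN, h1, h2⟩ := ih rfl hs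
      exact ⟨f', a', hN, h1, Relation.ReflTransGen.head hβ h2⟩

lemma rtg_spine {x y : Tm} (hs : Spine x) (h : RTG Beta x y) : Spine y := by
  induction h with
  | refl => exact hs
  | tail _ hstep ih => exact spine_beta ih hstep

lemma rtg_unb_appL {q y : Tm} : ∀ {x : Tm}, RTG Unb x y → Spine x →
    RTG Unb (app x q) (app y q) := by
  intro x h
  induction h using Relation.ReflTransGen.head_induction_on with
  | refl => intro _; exact Relation.ReflTransGen.refl
  | head hstep _ ih =>
    intro hs
    exact Relation.ReflTransGen.head (unb_appL_spine hs hstep)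
      (ih (spine_beta hs (unb_beta_sub hstep)))

lemma rtg_rest_appL {q y : Tm} : ∀ {x : Tm}, RTG Rest x y → Spine x →
    RTG Rest (app x q) (app y q) := by
  intro x h
  induction h using Relation.ReflTransGen.head_induction_on with
  | refl => intro _; exact Relation.ReflTransGen.refl
  | @head x' s hstep _ ih =>
    intro hs
    by_cases hne : x' = s
    · subst hne; exact ih hs
    · exact Relation.ReflTransGen.head (rest_appL hs hstep hne)
        (ih (spine_beta hs hstep.1))

lemma caseA : ∀ (X : Tm) {N : Tm},
    (∀ (N' M' : Tm), sz N' < sz N → RTG Beta M' N' → ∃ U, RTG Unb M' U ∧ RTG Rest U N') →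
    ¬ HasHead X → RTG Beta X N → ∃ U, RTG Unb X U ∧ RTG Rest U N := by
  intro X
  induction X with
  | var n =>
    intro N _ _ h
    have := rtg_beta_var h
    subst this
    exact ⟨var n, Relation.ReflTransGen.refl, Relation.ReflTransGen.refl⟩
  | lam X₀ _ =>
    intro N hIH hnh h
    obtain ⟨N₀, rfl, h₀⟩ := rtg_beta_lam h rfl
    obtain ⟨U₀, hu, hr⟩ := hIH N₀ X₀ (by simp) h₀
    exact ⟨lam U₀,
      Relation.ReflTransGen.lift Tm.lam (fun a b hab => unb_lam hab) _ _ hu,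
      Relation.ReflTransGen.lift Tm.lam (fun a b hab => rest_lam hab) _ _ hr⟩
  | app X₁ X₂ ih₁ _ =>
    intro N hIH hnh h
    have hs : Spine X₁ := noHead_app_spine hnh
    obtain ⟨N₁, N₂, rfl, h1, h2⟩ := rtg_beta_spine_app h rfl hs
    obtain ⟨U₂, hu2, hr2⟩ := hIH N₂ X₂ (by simp) h2
    obtain ⟨U₁, hu1, hr1⟩ := ih₁
      (fun N' M' hlt hb => hIH N' M' (by simp at hlt ⊢; omega) hb)
      (fun hf => by obtain ⟨s, hs'⟩ := hf; exact spine_noHead hs hs') h1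
    have hsU1 : Spine U₁ := rtg_spine hs
      (Relation.ReflTransGen.mono (fun a b hab => unb_beta_sub hab) _ _ hu1)
    have p1 : RTG Unb (app X₁ X₂) (app U₁ X₂) := rtg_unb_appL hu1 hs
    have p2 : RTG Unb (app U₁ X₂) (app U₁ U₂) :=
      Relation.ReflTransGen.lift (fun x => app U₁ x)
        (fun a b hab => unb_appR_spine hsU1 hab) _ _ hu2
    have r1 : RTG Rest (app U₁ U₂) (app U₁ N₂) :=
      rtg_lift_ne (fun x => app U₁ x) (fun a b hab hne => rest_appR hsU1 hab hne) hr2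
    have r2 : RTG Rest (app U₁ N₂) (app N₁ N₂) := rtg_rest_appL hr1 hsU1
    exact ⟨app U₁ U₂, Relation.ReflTransGen.trans p1 p2,
      Relation.ReflTransGen.trans r1 r2⟩

lemma mainW : ∀ (W : ℕ) (N : Tm), sz N < W → ∀ M, RTG Beta M N →
    ∃ U, RTG Unb M U ∧ RTG Rest U N := by
  intro W
  induction W with
  | zero => intro N h; omega
  | succ W ih =>
    intro N hN M h
    obtain ⟨U₀, hh, hi⟩ := diamond h
    have hunb : RTG Unb M U₀ :=
      Relation.ReflTransGen.mono (fun a b hab => Unb.head hab) _ _ hh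
    by_cases hH : HasHead U₀
    · exact ⟨U₀, hunb, restChain hi hH⟩
    · obtain ⟨U, h1, h2⟩ := caseA U₀
        (fun N' M' hlt hb => ih N' (by omega) M' hb) hH
        (Relation.ReflTransGen.mono (fun a b hab => hab.1) _ _ hi)
      exact ⟨U, Relation.ReflTransGen.trans hunb h1, h2⟩

/-- **Unbiased-strategy factorization for Call-by-Name**: if `M →β* N` then there is a
term `U` with `M ⊳* U` and `U ⋫* N`, where `⋫` is a β-step which is not a `⊳`-step. -/
theorem cbn_unbiased_factorization (M N : Tm) (h : Relation.ReflTransGen Beta M N) :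
    ∃ U : Tm, Relation.ReflTransGen Unb M U ∧
      Relation.ReflTransGen (fun a b => Beta a b ∧ ¬ Unb a b) U N := by
  obtain ⟨U, h1, h2⟩ := mainW (sz N + 1) N (Nat.lt_succ_self _) M h
  exact ⟨U, h1, h2⟩
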